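/- For all x > 0, the quantity C(x) = −2x² cosh x + x sinh x + cosh x · sinh²x is strictly positive. -/
import Mathlib

open Real Set

lemma aux_sinh_lt_mul_cosh (x : ℝ) (hx : 0 < x) : Real.sinh x < x * Real.cosh x := by
  have key : StrictMonoOn (fun y => y * Real.cosh y - Real.sinh y) (Set.Ici 0) := by
    refine strictMonoOn_of_deriv_pos (convex_Ici _)
      (Continuous.continuousOn (by continuity)) (fun y hy => ?_)
    rw [interior_Ici, Set.mem_Ioi] at hy
    have h : HasDerivAt (fun y => y * Real.cosh y - Real.sinh y)
        (1 * Real.cosh y + y * Real.sinh y - Real.cosh y) y :=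
      ((hasDerivAt_id y).mul (Real.hasDerivAt_cosh y)).sub (Real.hasDerivAt_sinh y)
    rw [h.deriv]
    have h1 : 0 < Real.sinh y := Real.sinh_pos_iff.mpr hy
    nlinarith
  have := key Set.self_mem_Ici (Set.mem_Ici.mpr hx.le) hx
  simp at this
  linarith

lemma aux_sinh_lower (x : ℝ) (hx : 0 < x) : x + x ^ 3 / 6 < Real.sinh x := by
  have key2 : StrictMonoOn (fun y => Real.cosh y - 1 - y ^ 2 / 2) (Set.Ici 0) := by
    refine strictMonoOn_of_deriv_pos (convex_Ici _)
      (Continuous.continuousOn (by continuity)) (fun y hy => ?_)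
    rw [interior_Ici, Set.mem_Ioi] at hy
    have h : HasDerivAt (fun y => Real.cosh y - 1 - y ^ 2 / 2)
        (Real.sinh y - 0 - (2 * y ^ 1) / 2) y := by
      exact ((Real.hasDerivAt_cosh y).sub (hasDerivAt_const y 1)).sub
        (((hasDerivAt_pow 2 y)).div_const 2)
    rw [h.deriv]
    have h1 : y < Real.sinh y := by
      rwa [Real.self_lt_sinh_iff]
    simp only [pow_one]
    linarith
  have hcosh : ∀ y : ℝ, 0 < y → 1 + y ^ 2 / 2 < Real.cosh y := by
    intro y hy
    have := key2 Set.self_mem_Ici (Set.mem_Ici.mpr hy.le) hy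
    simp at this
    linarith
  have key : StrictMonoOn (fun y => Real.sinh y - y - y ^ 3 / 6) (Set.Ici 0) := by
    refine strictMonoOn_of_deriv_pos (convex_Ici _)
      (Continuous.continuousOn (by continuity)) (fun y hy => ?_)
    rw [interior_Ici, Set.mem_Ioi] at hy
    have h : HasDerivAt (fun y => Real.sinh y - y - y ^ 3 / 6)
        (Real.cosh y - 1 - (3 * y ^ 2) / 6) y := by
      exact ((Real.hasDerivAt_sinh y).sub (hasDerivAt_id y)).sub
        ((hasDerivAt_pow 3 y).div_const 6)
    rw [h.deriv]
    have := hcosh y hy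
    nlinarith
  have := key Set.self_mem_Ici (Set.mem_Ici.mpr hx.le) hx
  simp at this
  linarith

lemma aux_pade (x : ℝ) (hx : 0 < x) :
    3 * x * Real.cosh x < Real.sinh x * (3 + x ^ 2) := by
  have key : StrictMonoOn (fun y => Real.sinh y * (3 + y ^ 2) - 3 * y * Real.cosh y)
      (Set.Ici 0) := by
    refine strictMonoOn_of_deriv_pos (convex_Ici _)
      (Continuous.continuousOn (by continuity)) (fun y hy => ?_)
    rw [interior_Ici, Set.mem_Ioi] at hy
    have h : HasDerivAt (fun y => Real.sinh y * (3 + y ^ 2) - 3 * y * Real.cosh y)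
        (Real.cosh y * (3 + y ^ 2) + Real.sinh y * (0 + 2 * y ^ 1)
          - ((3 * 1) * Real.cosh y + (3 * y) * Real.sinh y)) y := by
      exact ((Real.hasDerivAt_sinh y).mul ((hasDerivAt_const y 3).add (hasDerivAt_pow 2 y))).sub
        (((hasDerivAt_id y).const_mul 3).mul (Real.hasDerivAt_cosh y))
    rw [h.deriv]
    have h1 := aux_sinh_lt_mul_cosh y hy
    have h2 : 0 < Real.cosh y := Real.cosh_pos y
    simp only [pow_one]
    nlinarith
  have := key Set.self_mem_Ici (Set.mem_Ici.mpr hx.le) hx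
  simp at this
  linarith

theorem stmt_7 (x : ℝ) (hx : 0 < x) :
    0 < -2 * x ^ 2 * Real.cosh x + x * Real.sinh x + Real.cosh x * Real.sinh x ^ 2 := by
  set s := Real.sinh x with hs_def
  set c := Real.cosh x with hc_def
  have hs : 0 < s := Real.sinh_pos_iff.mpr hx
  have hc : 0 < c := Real.cosh_pos x
  have hD : 3 * x * c < s * (3 + x ^ 2) := aux_pade x hx
  have hL : x + x ^ 3 / 6 < s := aux_sinh_lower x hx
  rcases le_or_gt (s ^ 2) (2 * x ^ 2) with h | h
  · -- s² ≤ 2x² : use Padé bound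
    have hP : 0 ≤ (2 * x ^ 2 - s ^ 2) * (s * (3 + x ^ 2) - 3 * x * c) :=
      mul_nonneg (by linarith) (by linarith)
    have hQ : (x + x ^ 3 / 6) ^ 2 < s ^ 2 := by
      have h0 : (0:ℝ) ≤ x + x ^ 3 / 6 := by positivity
      exact pow_lt_pow_left₀ hL h0 two_ne_zero
    have hR : 0 < 3 * s ^ 2 + x ^ 2 * s ^ 2 - 3 * x ^ 2 - 2 * x ^ 4 := by nlinarith [sq_nonneg x, mul_pos hx hx, mul_pos (mul_pos hx hx) (mul_pos hx hx)]
    have hSR : 0 < s * (3 * s ^ 2 + x ^ 2 * s ^ 2 - 3 * x ^ 2 - 2 * x ^ 4) := mul_pos hs hR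
    nlinarith [hP, hSR, hx]
  · nlinarith [mul_pos hc (sub_pos.mpr h), mul_pos hx hs]
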